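/- Let F: (K, ∂K) → (ΩM, Ω₀M) be a non-contractible family of closed curves parametrized by a disc K, and suppose there exists a continuous family of arcs H(x,t) of length at most Λ with H(x,0) constant at F(x)(0), H(x,t)(0) = F(x)(0), H(x,t)(1) = F(x)(t), and H(x,1)(0) = H(x,1)(1). Then the family F̃(x) obtained by closing up the arcs H(x,1) is a non-contractible map (K, ∂K) → (Ω_Λ M, Ω₀M); in particular it is homotopic to F via the closed curves h(x,t) = H(x,t) * F(x)|_{[t,1]}. -/
import Mathlib

open Set
open scoped ENNReal

noncomputable def pathLength {M : Type*} [PseudoEMetricSpace M] (γ : ℝ → M) : ℝ≥0∞ :=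
  eVariationOn γ (Set.Icc 0 1)

/-- The disc `K`, realized as the unit square `I²`, and its boundary. -/
def I2 : Set (ℝ × ℝ) := Set.Icc 0 1 ×ˢ Set.Icc 0 1

def bdI2 : Set (ℝ × ℝ) := I2 \ (Set.Ioo 0 1 ×ˢ Set.Ioo 0 1)

/-- A continuous family of closed curves, i.e. a map of pairs `(K, ∂K) → (ΩM, Ω₀M)`. -/
def IsLoopFamily {M : Type*} [MetricSpace M] (F : ℝ × ℝ → ℝ → M) : Prop :=
  ContinuousOn (fun q : (ℝ × ℝ) × ℝ => F q.1 q.2) (I2 ×ˢ Set.Icc 0 1) ∧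
  (∀ x ∈ I2, F x 0 = F x 1) ∧
  (∀ x ∈ bdI2, ∀ t ∈ Set.Icc (0:ℝ) 1, F x t = F x 0)

def FamiliesHomotopic {M : Type*} [MetricSpace M] (F G : ℝ × ℝ → ℝ → M) : Prop :=
  ∃ Hm : ℝ → ℝ × ℝ → ℝ → M,
    ContinuousOn (fun q : ℝ × (ℝ × ℝ) × ℝ => Hm q.1 q.2.1 q.2.2)
      (Set.Icc 0 1 ×ˢ I2 ×ˢ Set.Icc 0 1) ∧
    (∀ x ∈ I2, ∀ t ∈ Set.Icc (0:ℝ) 1, Hm 0 x t = F x t) ∧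
    (∀ x ∈ I2, ∀ t ∈ Set.Icc (0:ℝ) 1, Hm 1 x t = G x t) ∧
    (∀ τ ∈ Set.Icc (0:ℝ) 1, IsLoopFamily (Hm τ))

def ContractibleFamily {M : Type*} [MetricSpace M] (F : ℝ × ℝ → ℝ → M) : Prop :=
  ∃ G : ℝ × ℝ → ℝ → M, (∀ x ∈ I2, ∀ t ∈ Set.Icc (0:ℝ) 1, G x t = G x 0) ∧
    FamiliesHomotopic F G

/-- Transitivity of `FamiliesHomotopic`, by gluing two homotopies at `τ = 1/2`. -/
lemma familiesHomotopic_trans {M : Type*} [MetricSpace M] {F G K : ℝ × ℝ → ℝ → M}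
    (h1 : FamiliesHomotopic F G) (h2 : FamiliesHomotopic G K) :
    FamiliesHomotopic F K := by
  obtain ⟨A, hAc, hA0, hA1, hAl⟩ := h1
  obtain ⟨B, hBc, hB0, hB1, hBl⟩ := h2
  refine ⟨fun τ => if τ ≤ 1/2 then A (2*τ) else B (2*τ - 1), ?_, ?_, ?_, ?_⟩
  · have heq : (fun q : ℝ × (ℝ × ℝ) × ℝ =>
        (if q.1 ≤ 1/2 then A (2*q.1) else B (2*q.1 - 1)) q.2.1 q.2.2) =
        fun q : ℝ × (ℝ × ℝ) × ℝ =>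
          if q.1 ≤ 1/2 then A (2*q.1) q.2.1 q.2.2 else B (2*q.1 - 1) q.2.1 q.2.2 := by
      funext q
      exact apply_ite (fun f : ℝ × ℝ → ℝ → M => f q.2.1 q.2.2) _ _ _
    rw [heq]
    have hfc : ContinuousOn (fun a : ℝ × (ℝ × ℝ) × ℝ => A (2*a.1) a.2.1 a.2.2)
        ((Set.Icc 0 1 ×ˢ I2 ×ˢ Set.Icc 0 1) ∩ {a : ℝ × (ℝ × ℝ) × ℝ | a.1 ≤ 1/2}) := by
      have : (fun a : ℝ × (ℝ × ℝ) × ℝ => A (2*a.1) a.2.1 a.2.2) =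
          (fun q : ℝ × (ℝ × ℝ) × ℝ => A q.1 q.2.1 q.2.2) ∘
          (fun a : ℝ × (ℝ × ℝ) × ℝ => (2*a.1, a.2)) := rfl
      rw [this]
      apply hAc.comp (Continuous.continuousOn (by fun_prop))
      rintro ⟨τ, x, t⟩ ⟨hq, hcl⟩
      have hc : τ ≤ 1/2 := hcl
      exact ⟨⟨by show (0:ℝ) ≤ 2*τ; linarith [hq.1.1], by show (2:ℝ)*τ ≤ 1; linarith⟩, hq.2⟩
    have hgc : ContinuousOn (fun a : ℝ × (ℝ × ℝ) × ℝ => B (2*a.1 - 1) a.2.1 a.2.2)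
        ((Set.Icc 0 1 ×ˢ I2 ×ˢ Set.Icc 0 1) ∩ {a : ℝ × (ℝ × ℝ) × ℝ | 1/2 ≤ a.1}) := by
      have : (fun a : ℝ × (ℝ × ℝ) × ℝ => B (2*a.1 - 1) a.2.1 a.2.2) =
          (fun q : ℝ × (ℝ × ℝ) × ℝ => B q.1 q.2.1 q.2.2) ∘
          (fun a : ℝ × (ℝ × ℝ) × ℝ => (2*a.1 - 1, a.2)) := rfl
      rw [this]
      apply hBc.comp (Continuous.continuousOn (by fun_prop))
      rintro ⟨τ, x, t⟩ ⟨hq, hcl⟩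
      have hc : (1/2:ℝ) ≤ τ := hcl
      exact ⟨⟨by show (0:ℝ) ≤ 2*τ - 1; linarith, by show (2:ℝ)*τ - 1 ≤ 1; linarith [hq.1.2]⟩, hq.2⟩
    apply ContinuousOn.if
    · rintro ⟨τ, x, t⟩ ⟨hq, hfr⟩
      have hτ : τ = 1/2 := frontier_le_subset_eq (by fun_prop) continuous_const hfr
      have hx : x ∈ I2 := hq.2.1
      have ht : t ∈ Set.Icc (0:ℝ) 1 := hq.2.2
      simp only
      rw [hτ, show (2:ℝ) * (1/2) - 1 = 0 by norm_num, show (2:ℝ) * (1/2) = 1 by norm_num,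
        hA1 x hx t ht, hB0 x hx t ht]
    · apply hfc.mono
      apply Set.inter_subset_inter_right
      rw [IsClosed.closure_eq (isClosed_le (by fun_prop) continuous_const)]
    · apply hgc.mono
      apply Set.inter_subset_inter_right
      have : {a : ℝ × (ℝ × ℝ) × ℝ | ¬ a.1 ≤ 1/2} = {a : ℝ × (ℝ × ℝ) × ℝ | (1/2:ℝ) < a.1} := by
        ext a; simp [not_le]
      rw [this]
      exact closure_lt_subset_le continuous_const (by fun_prop)
  · intro x hx t ht
    rw [show (fun τ : ℝ => if τ ≤ 1/2 then A (2*τ) else B (2*τ - 1)) 0 = A (2*0)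
      from if_pos (by norm_num)]
    rw [show (2:ℝ) * 0 = 0 by norm_num]
    exact hA0 x hx t ht
  · intro x hx t ht
    rw [show (fun τ : ℝ => if τ ≤ 1/2 then A (2*τ) else B (2*τ - 1)) 1 = B (2*1 - 1)
      from if_neg (by norm_num)]
    rw [show (2:ℝ) * 1 - 1 = 1 by norm_num]
    exact hB1 x hx t ht
  · intro τ hτ
    by_cases h : τ ≤ 1/2
    · rw [show (fun τ : ℝ => if τ ≤ 1/2 then A (2*τ) else B (2*τ - 1)) τ = A (2*τ)
        from if_pos h]
      exact hAl (2*τ) ⟨by linarith [hτ.1], by linarith⟩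
    · rw [show (fun τ : ℝ => if τ ≤ 1/2 then A (2*τ) else B (2*τ - 1)) τ = B (2*τ - 1)
        from if_neg h]
      push_neg at h
      exact hBl (2*τ - 1) ⟨by linarith, by linarith [hτ.2]⟩

/-- given a non-contractible family `F : (K, ∂K) → (ΩM, Ω₀M)` and a
continuous family of arcs `H(x,t)` of length at most `Λ` with `H x 0` constant at
`F x 0`, `H x t 0 = F x 0`, `H x t 1 = F x t` and `H x 1 0 = H x 1 1`, the family
`F̃ x := H x 1` obtained by closing up the arcs `H x 1` is a non-contractible map
`(K, ∂K) → (Ω_Λ M, Ω₀M)`; in particular it is homotopic to `F`. -/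
theorem stmt_15 {M : Type*} [MetricSpace M] [CompactSpace M]
    (F : ℝ × ℝ → ℝ → M) (Λ : ℝ)
    (hF : IsLoopFamily F) (hFnc : ¬ ContractibleFamily F)
    (H : ℝ × ℝ → ℝ → ℝ → M)
    (hHcont : ContinuousOn (fun q : (ℝ × ℝ) × ℝ × ℝ => H q.1 q.2.1 q.2.2)
      (I2 ×ˢ Set.Icc 0 1 ×ˢ Set.Icc 0 1))
    (hH0 : ∀ x ∈ I2, ∀ s ∈ Set.Icc (0:ℝ) 1, H x 0 s = F x 0)
    (hHends : ∀ x ∈ I2, ∀ t ∈ Set.Icc (0:ℝ) 1, H x t 0 = F x 0 ∧ H x t 1 = F x t)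
    (hHlen : ∀ x ∈ I2, ∀ t ∈ Set.Icc (0:ℝ) 1, pathLength (H x t) ≤ ENNReal.ofReal Λ)
    (hHclose : ∀ x ∈ I2, H x 1 0 = H x 1 1)
    (hHbd : ∀ x ∈ bdI2, ∀ t ∈ Set.Icc (0:ℝ) 1, ∀ s ∈ Set.Icc (0:ℝ) 1, H x t s = F x 0) :
    IsLoopFamily (fun x => H x 1) ∧
    (∀ x ∈ I2, pathLength (H x 1) ≤ ENNReal.ofReal Λ) ∧
    ¬ ContractibleFamily (fun x => H x 1) ∧
    FamiliesHomotopic F (fun x => H x 1) := by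
  have h01 : (0:ℝ) ∈ Set.Icc (0:ℝ) 1 := by norm_num
  have h11 : (1:ℝ) ∈ Set.Icc (0:ℝ) 1 := by norm_num
  -- the reparametrizing functions
  set α : ℝ → ℝ → ℝ := fun τ t => (1 - t) * max (2*τ - 1) 0 + t with hα
  set β : ℝ → ℝ → ℝ := fun τ t => (1 - t) * max (1 - 2*τ) 0 + t with hβ
  have hαmem : ∀ τ ∈ Set.Icc (0:ℝ) 1, ∀ t ∈ Set.Icc (0:ℝ) 1, α τ t ∈ Set.Icc (0:ℝ) 1 := by
    intro τ hτ t ht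
    have hm0 : (0:ℝ) ≤ max (2*τ - 1) 0 := le_max_right _ _
    have hm1 : max (2*τ - 1) 0 ≤ 1 := max_le (by linarith [hτ.2]) (by norm_num)
    constructor
    · have := mul_nonneg (by linarith [ht.2] : (0:ℝ) ≤ 1 - t) hm0
      simp only [hα]; linarith [ht.1]
    · simp only [hα]; nlinarith [ht.1, ht.2]
  have hβmem : ∀ τ ∈ Set.Icc (0:ℝ) 1, ∀ t ∈ Set.Icc (0:ℝ) 1, β τ t ∈ Set.Icc (0:ℝ) 1 := by
    intro τ hτ t ht
    have hm0 : (0:ℝ) ≤ max (1 - 2*τ) 0 := le_max_right _ _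
    have hm1 : max (1 - 2*τ) 0 ≤ 1 := max_le (by linarith [hτ.1]) (by norm_num)
    constructor
    · have := mul_nonneg (by linarith [ht.2] : (0:ℝ) ≤ 1 - t) hm0
      simp only [hβ]; linarith [ht.1]
    · simp only [hβ]; nlinarith [ht.1, ht.2]
  -- the main homotopy
  set Hm : ℝ → ℝ × ℝ → ℝ → M := fun τ x t => H x (α τ t) (β τ t) with hHm
  -- endpoint values of the homotopy
  have hHm0 : ∀ x ∈ I2, ∀ t ∈ Set.Icc (0:ℝ) 1, Hm 0 x t = F x t := by
    intro x hx t ht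
    have hα0 : α 0 t = t := by simp [hα]
    have hβ0 : β 0 t = 1 := by simp [hβ]
    show H x (α 0 t) (β 0 t) = F x t
    rw [hα0, hβ0]
    exact (hHends x hx t ht).2
  have hHm1 : ∀ x ∈ I2, ∀ t ∈ Set.Icc (0:ℝ) 1, Hm 1 x t = H x 1 t := by
    intro x hx t ht
    have hα1 : α 1 t = 1 := by
      simp only [hα]; rw [show (2:ℝ)*1 - 1 = 1 by norm_num, max_eq_left (by norm_num)]; ring
    have hβ1 : β 1 t = t := by
      simp only [hβ]; rw [show (1:ℝ) - 2*1 = -1 by norm_num, max_eq_right (by norm_num)]; ring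
    show H x (α 1 t) (β 1 t) = H x 1 t
    rw [hα1, hβ1]
  -- at t = 0 the homotopy is at the basepoint
  have hHmt0 : ∀ τ ∈ Set.Icc (0:ℝ) 1, ∀ x ∈ I2, Hm τ x 0 = F x 0 := by
    intro τ hτ x hx
    have hα0 : α τ 0 = max (2*τ - 1) 0 := by simp [hα]
    have hβ0 : β τ 0 = max (1 - 2*τ) 0 := by simp [hβ]
    show H x (α τ 0) (β τ 0) = F x 0
    rw [hα0, hβ0]
    by_cases h : τ ≤ 1/2
    · rw [max_eq_right (by linarith : 2*τ - 1 ≤ 0)]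
      exact hH0 x hx _ ⟨le_max_right _ _, max_le (by linarith [hτ.1]) (by norm_num)⟩
    · push_neg at h
      rw [max_eq_right (by linarith : 1 - 2*τ ≤ 0)]
      exact (hHends x hx _ ⟨le_max_right _ _, max_le (by linarith [hτ.2]) (by norm_num)⟩).1
  -- at t = 1 the homotopy is at the basepoint
  have hHmt1 : ∀ τ ∈ Set.Icc (0:ℝ) 1, ∀ x ∈ I2, Hm τ x 1 = F x 0 := by
    intro τ hτ x hx
    have hα1 : α τ 1 = 1 := by simp [hα]
    have hβ1 : β τ 1 = 1 := by simp [hβ]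
    show H x (α τ 1) (β τ 1) = F x 0
    rw [hα1, hβ1, (hHends x hx 1 h11).2]
    exact (hF.2.1 x hx).symm
  have hbd_sub : bdI2 ⊆ I2 := fun x hx => hx.1
  -- continuity of the full homotopy
  have hHmcont : ContinuousOn (fun q : ℝ × (ℝ × ℝ) × ℝ => Hm q.1 q.2.1 q.2.2)
      (Set.Icc 0 1 ×ˢ I2 ×ˢ Set.Icc 0 1) := by
    have : (fun q : ℝ × (ℝ × ℝ) × ℝ => Hm q.1 q.2.1 q.2.2) =
        (fun q : (ℝ × ℝ) × ℝ × ℝ => H q.1 q.2.1 q.2.2) ∘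
        (fun q : ℝ × (ℝ × ℝ) × ℝ => (q.2.1, α q.1 q.2.2, β q.1 q.2.2)) := rfl
    rw [this]
    apply hHcont.comp (Continuous.continuousOn (by fun_prop))
    rintro ⟨τ, x, t⟩ ⟨hτ, hx, ht⟩
    exact ⟨hx, hαmem τ hτ t ht, hβmem τ hτ t ht⟩
  -- each slice is a loop family
  have hHmloop : ∀ τ ∈ Set.Icc (0:ℝ) 1, IsLoopFamily (Hm τ) := by
    intro τ hτ
    refine ⟨?_, ?_, ?_⟩
    · have : (fun q : (ℝ × ℝ) × ℝ => Hm τ q.1 q.2) =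
          (fun q : (ℝ × ℝ) × ℝ × ℝ => H q.1 q.2.1 q.2.2) ∘
          (fun q : (ℝ × ℝ) × ℝ => (q.1, α τ q.2, β τ q.2)) := rfl
      rw [this]
      apply hHcont.comp (Continuous.continuousOn (by fun_prop))
      rintro ⟨x, t⟩ ⟨hx, ht⟩
      exact ⟨hx, hαmem τ hτ t ht, hβmem τ hτ t ht⟩
    · intro x hx
      rw [hHmt0 τ hτ x hx, hHmt1 τ hτ x hx]
    · intro x hx t ht
      show Hm τ x t = Hm τ x 0
      rw [hHmt0 τ hτ x (hbd_sub hx)]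
      exact hHbd x hx _ (hαmem τ hτ t ht) _ (hβmem τ hτ t ht)
  have hFhom : FamiliesHomotopic F (fun x => H x 1) := by
    refine ⟨Hm, hHmcont, hHm0, hHm1, hHmloop⟩
  -- the closed-up family is a loop family
  have hLF : IsLoopFamily (fun x => H x 1) := by
    refine ⟨?_, ?_, ?_⟩
    · have : (fun q : (ℝ × ℝ) × ℝ => H q.1 1 q.2) =
          (fun q : (ℝ × ℝ) × ℝ × ℝ => H q.1 q.2.1 q.2.2) ∘
          (fun q : (ℝ × ℝ) × ℝ => (q.1, 1, q.2)) := rfl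
      rw [this]
      apply hHcont.comp (Continuous.continuousOn (by fun_prop))
      rintro ⟨x, t⟩ ⟨hx, ht⟩
      exact ⟨hx, h11, ht⟩
    · intro x hx; exact hHclose x hx
    · intro x hx t ht
      show H x 1 t = H x 1 0
      rw [hHbd x hx 1 h11 t ht, hHbd x hx 1 h11 0 h01]
  refine ⟨hLF, fun x hx => hHlen x hx 1 h11, ?_, hFhom⟩
  -- non-contractibility
  intro ⟨G, hGconst, hGhom⟩
  exact hFnc ⟨G, hGconst, familiesHomotopic_trans hFhom hGhom⟩
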